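/- Let Base be a finite set of B atoms and E : Base → [0,1] with E(a) ≥ 1/2 for all a (the evidence of each typical atom). Define ER(mtm) = 1 - (1/B)∑_a E(a) and ER(rand) = (2/B)∑_a E(a)(1 - E(a)). Then ER(rand) ≥ ER(mtm), with ER(rand)/ER(mtm) → 2 as the average evidence tends to 1 along sequences where all E(a) are equal. -/

import Mathlib

theorem stmt_6 {Base : Type*} [Fintype Base] [Nonempty Base]
    (E : Base → ℝ) (hE : ∀ a, 1 / 2 ≤ E a ∧ E a ≤ 1) :
    (2 / (Fintype.card Base : ℝ)) * ∑ a, E a * (1 - E a) ≥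
      1 - (1 / (Fintype.card Base : ℝ)) * ∑ a, E a ∧
    Filter.Tendsto (fun e : ℝ => (2 * e * (1 - e)) / (1 - e))
      (nhdsWithin 1 (Set.Iio 1)) (nhds 2) := by
  constructor
  · have hB : (0 : ℝ) < (Fintype.card Base : ℝ) := by
      exact_mod_cast Fintype.card_pos
    have key : ∀ a, 1 - E a ≤ 2 * (E a * (1 - E a)) := by
      intro a
      obtain ⟨h1, h2⟩ := hE a
      nlinarith
    have hsum : ∑ a, (1 - E a) ≤ ∑ a, 2 * (E a * (1 - E a)) :=
      Finset.sum_le_sum (fun a _ => key a)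
    have h1 : 1 - (1 / (Fintype.card Base : ℝ)) * ∑ a, E a
        = (1 / (Fintype.card Base : ℝ)) * ∑ a, (1 - E a) := by
      rw [Finset.sum_sub_distrib, Finset.sum_const, Finset.card_univ]
      field_simp
      rw [nsmul_eq_mul, mul_one]
    rw [ge_iff_le, h1]
    calc (1 / (Fintype.card Base : ℝ)) * ∑ a, (1 - E a)
        ≤ (1 / (Fintype.card Base : ℝ)) * ∑ a, 2 * (E a * (1 - E a)) := by
          apply mul_le_mul_of_nonneg_left hsum (by positivity)
      _ = (2 / (Fintype.card Base : ℝ)) * ∑ a, E a * (1 - E a) := by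
          rw [← Finset.mul_sum]; ring
  · have heq : ∀ e ∈ Set.Iio (1 : ℝ), (2 * e * (1 - e)) / (1 - e) = 2 * e := by
      intro e he
      have : (1 : ℝ) - e ≠ 0 := by simp at he; linarith
      field_simp
    have h2 : Filter.Tendsto (fun e : ℝ => 2 * e) (nhdsWithin 1 (Set.Iio 1)) (nhds 2) := by
      have h : Filter.Tendsto (fun e : ℝ => 2 * e) (nhds 1) (nhds (2 * 1)) :=
        Filter.tendsto_id.const_mul 2
      simpa using h.mono_left nhdsWithin_le_nhds
    exact h2.congr' (Filter.eventuallyEq_of_mem self_mem_nhdsWithin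
      (fun e he => (heq e he).symm))
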